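/- If b ≥ 27/4, then the integral ∫₀^s dx/(x + b(1 - x^{1/3})) diverges to +∞ as s increases to s₀, where s₀ is the smallest positive zero of x + b(1 - x^{1/3}); moreover 1 ≤ s₀ ≤ 27/8, and s₀ decreases to 1 as b → ∞. -/

import Mathlib

open Set Filter Topology MeasureTheory intervalIntegral Real

noncomputable def F (b x : ℝ) : ℝ := x + b * (1 - x ^ ((1:ℝ)/3))

lemma contF (b : ℝ) : Continuous (F b) := by
  have h : Continuous (fun x : ℝ => x ^ ((1:ℝ)/3)) := by
    rw [continuous_iff_continuousAt]
    intro x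
    exact Real.continuousAt_rpow_const x _ (Or.inr (by norm_num))
  unfold F
  continuity

lemma cube (x : ℝ) (hx : 0 ≤ x) : (x ^ ((1:ℝ)/3))^(3:ℕ) = x := by
  rw [one_div, ← Real.rpow_natCast (x ^ ((3:ℝ)⁻¹ : ℝ)) 3, ← Real.rpow_mul hx]
  norm_num

lemma F_one (b : ℝ) : F b 1 = 1 := by simp [F, Real.one_rpow]

-- if F b c ≤ 0 and 1 < c, then s0 ≤ c, where s0 is smallest positive zero
lemma zero_le_of (b c s0 : ℝ)
    (hmin : ∀ x : ℝ, 0 < x → F b x = 0 → s0 ≤ x)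
    (hc1 : 1 < c) (hc : F b c ≤ 0) : s0 ≤ c := by
  have hcont : ContinuousOn (F b) (Icc 1 c) := (contF b).continuousOn
  have h0 : (0:ℝ) ∈ Icc (F b c) (F b 1) := by
    constructor
    · exact hc
    · rw [F_one]; norm_num
  obtain ⟨z, hz, hz0⟩ := intermediate_value_Icc' hc1.le hcont h0
  have hz1 : z ≠ 1 := by
    intro h; rw [h, F_one] at hz0; norm_num at hz0
  have : 0 < z := lt_of_lt_of_le one_pos (hz.1)
  exact le_trans (hmin z this hz0) hz.2

-- 1 < s0
lemma one_lt_s0 (b s0 : ℝ) (hb : 27/4 ≤ b) (h0 : 0 < s0) (hz : F b s0 = 0) : 1 < s0 := by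
  by_contra h
  push_neg at h
  have h13 : s0 ^ ((1:ℝ)/3) ≤ 1 := by
    calc s0 ^ ((1:ℝ)/3) ≤ 1 ^ ((1:ℝ)/3) := Real.rpow_le_rpow h0.le h (by norm_num)
    _ = 1 := Real.one_rpow _
  have : 0 < F b s0 := by
    unfold F
    have : 0 ≤ b * (1 - s0 ^ ((1:ℝ)/3)) := mul_nonneg (by linarith) (by linarith)
    linarith
  linarith [hz ▸ this]

lemma s0_le (b s0 : ℝ) (hb : 27/4 ≤ b)
    (hmin : ∀ x : ℝ, 0 < x → F b x = 0 → s0 ≤ x) : s0 ≤ 27/8 := by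
  apply zero_le_of b _ s0 hmin (by norm_num)
  have h : ((27/8 : ℝ)) ^ ((1:ℝ)/3) = 3/2 := by
    have : (27/8:ℝ) = (3/2)^(3:ℕ) := by norm_num
    rw [this, ← Real.rpow_natCast (3/2 : ℝ) 3, ← Real.rpow_mul (by norm_num)]
    norm_num
  unfold F
  rw [h]
  linarith

-- positivity before s0
lemma F_pos (b s0 : ℝ) (hb : 27/4 ≤ b)
    (hmin : ∀ x : ℝ, 0 < x → F b x = 0 → s0 ≤ x)
    (x : ℝ) (hx0 : 0 ≤ x) (hxs : x < s0) : 0 < F b x := by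
  by_contra h
  push_neg at h
  have hF0 : 0 < F b 0 := by
    unfold F
    rw [Real.zero_rpow (by norm_num)]
    simp; linarith
  have hx0' : 0 < x := by
    rcases eq_or_lt_of_le hx0 with h' | h'
    · exfalso; rw [← h'] at h; linarith
    · exact h'
  have hcont : ContinuousOn (F b) (Icc 0 x) := (contF b).continuousOn
  have h0 : (0:ℝ) ∈ Icc (F b x) (F b 0) := ⟨h, hF0.le⟩
  obtain ⟨z, hz, hz0⟩ := intermediate_value_Icc' hx0 hcont h0
  have hzpos : 0 < z := by
    rcases eq_or_lt_of_le hz.1 with h' | h'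
    · exfalso; rw [← h'] at hz0; linarith
    · exact h'
  have := hmin z hzpos hz0
  linarith [hz.2]

-- Lipschitz-type upper bound on [1, s0]
lemma F_le (b s0 : ℝ) (hb : 27/4 ≤ b) (h0 : 0 < s0) (hz : F b s0 = 0)
    (x : ℝ) (hx1 : 1 ≤ x) (hxs : x ≤ s0) : F b x ≤ b/3 * (s0 - x) := by
  set u := s0 ^ ((1:ℝ)/3) with hu
  set v := x ^ ((1:ℝ)/3) with hv
  have hv1 : 1 ≤ v := by
    calc (1:ℝ) = 1 ^ ((1:ℝ)/3) := (Real.one_rpow _).symm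
    _ ≤ v := Real.rpow_le_rpow (by norm_num) hx1 (by norm_num)
  have huv : v ≤ u := Real.rpow_le_rpow (by linarith) hxs (by norm_num)
  have hu3 : u^(3:ℕ) = s0 := cube s0 h0.le
  have hv3 : v^(3:ℕ) = x := cube x (by linarith)
  have hkey : 3 * (u - v) ≤ u^(3:ℕ) - v^(3:ℕ) := by
    nlinarith [mul_nonneg (sub_nonneg.2 huv) (by nlinarith : (0:ℝ) ≤ u^2 + u*v + v^2 - 3)]
  have hFz : s0 + b * (1 - u) = 0 := hz
  have : F b x = (x - s0) + b * (u - v) := by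
    unfold F
    rw [← hv]
    linarith [hFz]
  rw [this]
  rw [hu3, hv3] at hkey
  nlinarith

lemma diverge (b s0 : ℝ) (hb : 27/4 ≤ b) (h0 : 0 < s0) (hz : F b s0 = 0)
    (hmin : ∀ x : ℝ, 0 < x → F b x = 0 → s0 ≤ x) :
    Tendsto (fun s => ∫ x in (0:ℝ)..s, 1 / F b x) (𝓝[<] s0) atTop := by
  have h1s : 1 < s0 := one_lt_s0 b s0 hb h0 hz
  have hbpos : (0:ℝ) < b := by linarith
  have hInt : ∀ s t : ℝ, 0 ≤ s → s ≤ t → t < s0 →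
      IntervalIntegrable (fun x => 1 / F b x) volume s t := by
    intro s t hs hst hts0
    apply ContinuousOn.intervalIntegrable
    apply ContinuousOn.div continuousOn_const (contF b).continuousOn
    intro x hx
    rw [uIcc_of_le hst] at hx
    exact (F_pos b s0 hb hmin x (le_trans hs hx.1) (lt_of_le_of_lt hx.2 hts0)).ne'
  set C0 := ∫ x in (0:ℝ)..1, 1 / F b x with hC0
  have key : ∀ s ∈ Ioo (1:ℝ) s0,
      C0 + 3/b * (Real.log (s0-1) - Real.log (s0-s)) ≤ ∫ x in (0:ℝ)..s, 1 / F b x := by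
    intro s hs
    obtain ⟨hs1, hss0⟩ := hs
    have hcs : 0 < s0 - s := by linarith
    have hsplit : (∫ x in (0:ℝ)..s, 1 / F b x)
        = C0 + ∫ x in (1:ℝ)..s, 1 / F b x := by
      rw [hC0]
      exact (integral_add_adjacent_intervals (hInt 0 1 le_rfl (by norm_num) h1s)
        (hInt 1 s (by norm_num) hs1.le hss0)).symm
    have hcontInv : IntervalIntegrable (fun x => (s0 - x)⁻¹) volume 1 s := by
      apply ContinuousOn.intervalIntegrable
      apply ContinuousOn.inv₀ (by fun_prop)
      intro x hx
      rw [uIcc_of_le hs1.le] at hx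
      have : 0 < s0 - x := by linarith [hx.2]
      exact this.ne'
    have hftc : ∫ x in (1:ℝ)..s, (s0 - x)⁻¹ = Real.log (s0-1) - Real.log (s0-s) := by
      have hderiv : ∀ x ∈ uIcc (1:ℝ) s,
          HasDerivAt (fun y => -Real.log (s0 - y)) ((s0 - x)⁻¹) x := by
        intro x hx
        rw [uIcc_of_le hs1.le] at hx
        have hxs0 : 0 < s0 - x := by linarith [hx.2]
        have h1 : HasDerivAt (fun y : ℝ => s0 - y) (-1) x := (hasDerivAt_id x).const_sub s0
        have h2 := (Real.hasDerivAt_log hxs0.ne').comp x h1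
        have h3 := h2.neg
        exact h3.congr_deriv (by ring)
      rw [integral_eq_sub_of_hasDerivAt hderiv hcontInv]
      ring
    have hmono : ∫ x in (1:ℝ)..s, 3/b * (s0 - x)⁻¹ ≤ ∫ x in (1:ℝ)..s, 1 / F b x := by
      apply integral_mono_on hs1.le (hcontInv.const_mul (3/b))
        (hInt 1 s (by norm_num) hs1.le hss0)
      intro x hx
      have hx1 : 1 ≤ x := hx.1
      have hxs : x < s0 := lt_of_le_of_lt hx.2 hss0
      have hF : 0 < F b x := F_pos b s0 hb hmin x (by linarith) hxs
      have hle : F b x ≤ b/3 * (s0 - x) := F_le b s0 hb h0 hz x hx1 hxs.le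
      have hsx : 0 < s0 - x := by linarith
      have heq : 3/b * (s0 - x)⁻¹ = 3 / (b * (s0 - x)) := by field_simp
      rw [heq, div_le_div_iff₀ (by positivity) hF]
      nlinarith
    have hcalc : ∫ x in (1:ℝ)..s, 3/b * (s0 - x)⁻¹
        = 3/b * (Real.log (s0-1) - Real.log (s0-s)) := by
      rw [intervalIntegral.integral_const_mul, hftc]
    rw [hsplit]
    rw [hcalc] at hmono
    linarith
  have hlog : Tendsto (fun s => Real.log (s0 - s)) (𝓝[<] s0) atBot := by
    apply Real.tendsto_log_nhdsGT_zero.comp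
    apply tendsto_nhdsWithin_of_tendsto_nhds_of_eventually_within
    · have : Tendsto (fun s : ℝ => s0 - s) (𝓝 s0) (𝓝 (s0 - s0)) :=
        (continuous_const.sub continuous_id).tendsto s0
      rw [sub_self] at this
      exact this.mono_left nhdsWithin_le_nhds
    · filter_upwards [self_mem_nhdsWithin] with x hx
      simp only [mem_Iio] at hx
      exact sub_pos.2 hx
  have hT : Tendsto (fun s => C0 + 3/b * (Real.log (s0-1) - Real.log (s0-s)))
      (𝓝[<] s0) atTop := by
    apply tendsto_atTop_add_const_left
    apply Tendsto.const_mul_atTop (by positivity : (0:ℝ) < 3/b)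
    apply tendsto_atTop_add_const_left
    exact tendsto_neg_atBot_atTop.comp hlog |>.congr (fun s => rfl)
  apply tendsto_atTop_mono' _ _ hT
  filter_upwards [Ioo_mem_nhdsLT_of_mem (⟨h1s, le_refl s0⟩ : s0 ∈ Ioc 1 s0)] with s hs
  exact key s hs

theorem divergence_at_smallest_zero
    (s0 : ℝ → ℝ)
    (hs0 : ∀ b : ℝ, 27/4 ≤ b →
      0 < s0 b ∧ (s0 b + b * (1 - (s0 b) ^ ((1:ℝ)/3)) = 0) ∧
      (∀ x : ℝ, 0 < x → x + b * (1 - x ^ ((1:ℝ)/3)) = 0 → s0 b ≤ x)) :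
    (∀ b : ℝ, 27/4 ≤ b →
      Tendsto (fun s => ∫ x in (0:ℝ)..s, 1 / (x + b * (1 - x ^ ((1:ℝ)/3))))
        (𝓝[<] (s0 b)) atTop) ∧
    (∀ b : ℝ, 27/4 ≤ b → 1 ≤ s0 b ∧ s0 b ≤ 27/8) ∧
    AntitoneOn s0 (Set.Ici (27/4)) ∧
    Tendsto s0 atTop (𝓝 1) := by
  have hs0' : ∀ b : ℝ, 27/4 ≤ b →
      0 < s0 b ∧ F b (s0 b) = 0 ∧ (∀ x : ℝ, 0 < x → F b x = 0 → s0 b ≤ x) := hs0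
  refine ⟨?_, ?_, ?_, ?_⟩
  · intro b hb
    obtain ⟨h0, hz, hmin⟩ := hs0' b hb
    have := diverge b (s0 b) hb h0 hz hmin
    simpa [F] using this
  · intro b hb
    obtain ⟨h0, hz, hmin⟩ := hs0' b hb
    exact ⟨(one_lt_s0 b (s0 b) hb h0 hz).le, s0_le b (s0 b) hb hmin⟩
  · intro a ha b hb hab
    simp only [mem_Ici] at ha hb
    obtain ⟨ha0, haz, hamin⟩ := hs0' a ha
    obtain ⟨hb0, hbz, hbmin⟩ := hs0' b hb
    have h1a : 1 < s0 a := one_lt_s0 a (s0 a) ha ha0 haz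
    have h13 : 1 ≤ (s0 a) ^ ((1:ℝ)/3) := by
      calc (1:ℝ) = 1 ^ ((1:ℝ)/3) := (Real.one_rpow _).symm
      _ ≤ (s0 a) ^ ((1:ℝ)/3) := Real.rpow_le_rpow (by norm_num) h1a.le (by norm_num)
    have hFb : F b (s0 a) ≤ 0 := by
      have : b * (1 - (s0 a) ^ ((1:ℝ)/3)) ≤ a * (1 - (s0 a) ^ ((1:ℝ)/3)) := by
        apply mul_le_mul_of_nonpos_right hab (by linarith)
      unfold F at haz ⊢
      linarith
    exact zero_le_of b (s0 a) (s0 b) hbmin h1a hFb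
  · rw [Metric.tendsto_atTop]
    intro ε hε
    set δ := ε/2 with hδ
    have hδ0 : 0 < δ := by positivity
    have hδ13 : 1 < (1+δ) ^ ((1:ℝ)/3) := by
      calc (1:ℝ) = 1 ^ ((1:ℝ)/3) := (Real.one_rpow _).symm
      _ < (1+δ) ^ ((1:ℝ)/3) := Real.rpow_lt_rpow (by norm_num) (by linarith) (by norm_num)
    refine ⟨max (27/4) ((1+δ)/((1+δ) ^ ((1:ℝ)/3) - 1)), fun b hbN => ?_⟩
    have hb : 27/4 ≤ b := le_trans (le_max_left _ _) hbN
    have hb2 : (1+δ)/((1+δ) ^ ((1:ℝ)/3) - 1) ≤ b := le_trans (le_max_right _ _) hbN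
    obtain ⟨h0, hz, hmin⟩ := hs0' b hb
    have h1b : 1 < s0 b := one_lt_s0 b (s0 b) hb h0 hz
    have hFc : F b (1+δ) ≤ 0 := by
      have hpos : 0 < (1+δ) ^ ((1:ℝ)/3) - 1 := by linarith
      rw [div_le_iff₀ hpos] at hb2
      unfold F
      nlinarith
    have hub : s0 b ≤ 1 + δ := zero_le_of b (1+δ) (s0 b) hmin (by linarith) hFc
    rw [Real.dist_eq, abs_lt]
    constructor <;> [linarith; linarith [hδ]]
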